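/- For every δ > 0 and σ > 0, the function ϕ(x) = Φ((x - δ)/σ) / Φ(x/σ) is strictly increasing on ℝ, where Φ is the standard normal CDF. -/

import Mathlib

open MeasureTheory Real Set Filter


/-- Standard normal PDF. -/
noncomputable def stdPdf (x : ℝ) : ℝ := Real.exp (-(x ^ 2) / 2) / Real.sqrt (2 * Real.pi)

/-- Standard normal CDF. -/
noncomputable def stdCdf (x : ℝ) : ℝ := ∫ t in Set.Iic x, stdPdf t


lemma stdPdf_pos (x : ℝ) : 0 < stdPdf x :=
  div_pos (Real.exp_pos _) (Real.sqrt_pos.2 (by positivity))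

lemma stdPdf_eq (x : ℝ) : stdPdf x = Real.exp (-(1/2) * x ^ 2) / Real.sqrt (2 * Real.pi) := by
  unfold stdPdf; ring_nf

lemma integrable_stdPdf : Integrable stdPdf := by
  have h := (integrable_exp_neg_mul_sq (by norm_num : (0:ℝ) < 1/2)).div_const (Real.sqrt (2 * Real.pi))
  exact h.congr (by filter_upwards with x using (stdPdf_eq x).symm)

lemma integrable_mul_stdPdf : Integrable (fun x => x * stdPdf x) := by
  have h := (integrable_mul_exp_neg_mul_sq (by norm_num : (0:ℝ) < 1/2)).div_const (Real.sqrt (2 * Real.pi))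
  exact h.congr (by filter_upwards with x using by rw [stdPdf_eq]; ring)

lemma continuous_stdPdf : Continuous stdPdf := by
  unfold stdPdf; fun_prop

lemma stdCdf_pos (x : ℝ) : 0 < stdCdf x := by
  rw [stdCdf, setIntegral_pos_iff_support_of_nonneg_ae
    (Filter.Eventually.of_forall fun t => (stdPdf_pos t).le) integrable_stdPdf.integrableOn]
  have : Function.support stdPdf ∩ Iic x = Iic x := by
    rw [inter_eq_right]; intro t _; exact (stdPdf_pos t).ne'
  rw [this]
  simp

lemma hasDerivAt_stdCdf (x : ℝ) : HasDerivAt stdCdf (stdPdf x) x := by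
  have key : ∀ y : ℝ, stdCdf y = stdCdf 0 + ∫ t in (0:ℝ)..y, stdPdf t := by
    intro y
    have h := intervalIntegral.integral_Iic_sub_Iic (μ := volume) (f := stdPdf) (a := (0:ℝ))
      (b := y) integrable_stdPdf.integrableOn integrable_stdPdf.integrableOn
    unfold stdCdf
    rw [← h]; ring
  have h : HasDerivAt (fun y => stdCdf 0 + ∫ t in (0:ℝ)..y, stdPdf t) (stdPdf x) x := by
    apply HasDerivAt.const_add
    exact intervalIntegral.integral_hasDerivAt_right
      (integrable_stdPdf.intervalIntegrable)
      (continuous_stdPdf.stronglyMeasurableAtFilter _ _)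
      continuous_stdPdf.continuousAt
  exact h.congr_of_eventuallyEq (Filter.Eventually.of_forall key)

lemma hasDerivAt_stdPdf (x : ℝ) : HasDerivAt stdPdf (-x * stdPdf x) x := by
  have h1 : HasDerivAt (fun y : ℝ => -(y ^ 2) / 2) (-x) x := by
    have := ((hasDerivAt_pow 2 x).neg).div_const 2
    refine this.congr_deriv ?_; push_cast; ring
  have h2 := (h1.exp).div_const (Real.sqrt (2 * Real.pi))
  refine h2.congr_deriv ?_
  unfold stdPdf; ring

lemma tendsto_stdPdf_atBot : Tendsto stdPdf atBot (nhds 0) := by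
  have hsq : Tendsto (fun x : ℝ => x ^ 2) atBot atTop := by
    have h0 : Tendsto (fun x : ℝ => x ^ 2) atTop atTop :=
      tendsto_pow_atTop (by norm_num)
    have hneg : Tendsto (fun x : ℝ => -x) atBot atTop := tendsto_neg_atBot_atTop
    have := h0.comp hneg
    refine this.congr fun x => by simp [Function.comp]
  have h1 : Tendsto (fun x : ℝ => -(x ^ 2) / 2) atBot atBot := by
    apply Tendsto.atBot_div_const (by norm_num)
    exact tendsto_neg_atTop_atBot.comp hsq
  have h2 := (Real.tendsto_exp_atBot.comp h1).div_const (Real.sqrt (2 * Real.pi))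
  simp only [zero_div] at h2
  exact h2

lemma integral_mul_stdPdf (x : ℝ) : ∫ t in Set.Iic x, t * stdPdf t = -stdPdf x := by
  have h := integral_Iic_of_hasDerivAt_of_tendsto' (a := x) (f := fun t => -stdPdf t)
    (f' := fun t => t * stdPdf t) (m := 0)
    (fun t _ => by exact (hasDerivAt_stdPdf t).neg.congr_deriv (by ring))
    integrable_mul_stdPdf.integrableOn
    (by simpa using tendsto_stdPdf_atBot.neg)
  simpa using h

lemma key_pos (x : ℝ) : 0 < x * stdCdf x + stdPdf x := by
  rcases le_or_gt 0 x with hx | hx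
  · have := stdCdf_pos x
    nlinarith [stdPdf_pos x]
  · -- x < 0 : show stdCdf x < -stdPdf x / x via comparison with (t/x) * stdPdf t
    have hint : IntegrableOn (fun t => (t / x - 1) * stdPdf t) (Iic x) := by
      apply Integrable.integrableOn
      have := (integrable_mul_stdPdf.div_const x).sub integrable_stdPdf
      exact this.congr (by filter_upwards with t using by simp only [Pi.sub_apply]; ring)
    have hpos : 0 < ∫ t in Set.Iic x, (t / x - 1) * stdPdf t := by
      rw [setIntegral_pos_iff_support_of_nonneg_ae _ hint]
      · have hsub : Iio x ⊆ Function.support (fun t => (t / x - 1) * stdPdf t) ∩ Iic x := by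
          intro t ht
          constructor
          · have h1 : 1 < t / x := by
              rw [lt_div_iff_of_neg hx]; linarith [ht.out]
            exact mul_ne_zero (by linarith) (stdPdf_pos t).ne'
          · exact mem_Iic.2 ht.out.le
        refine lt_of_lt_of_le ?_ (measure_mono hsub)
        simp
      · filter_upwards [ae_restrict_mem measurableSet_Iic] with t ht
        have h1 : 1 ≤ t / x := by
          rw [le_div_iff_of_neg hx]; linarith [ht.out]
        exact mul_nonneg (by linarith) (stdPdf_pos t).le
    have heq : ∫ t in Set.Iic x, (t / x - 1) * stdPdf t
        = (-stdPdf x) / x - stdCdf x := by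
      have h1 : ∫ t in Set.Iic x, (t / x - 1) * stdPdf t
          = (∫ t in Set.Iic x, t * stdPdf t) / x - ∫ t in Set.Iic x, stdPdf t := by
        rw [← integral_div, ← integral_sub (integrable_mul_stdPdf.integrableOn.div_const x)
          integrable_stdPdf.integrableOn]
        congr 1; funext t; ring
      rw [h1, integral_mul_stdPdf]; rfl
    rw [heq] at hpos
    have : stdCdf x < -stdPdf x / x := by linarith
    have h2 : x * stdCdf x > x * (-stdPdf x / x) := by
      exact (mul_lt_mul_left_of_neg hx).2 this
    rw [mul_div_cancel₀ _ (ne_of_lt hx)] at h2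
    linarith

noncomputable def hazard (x : ℝ) : ℝ := stdPdf x / stdCdf x

lemma hasDerivAt_hazard (x : ℝ) :
    HasDerivAt hazard (-stdPdf x * (x * stdCdf x + stdPdf x) / (stdCdf x) ^ 2) x := by
  have h := (hasDerivAt_stdPdf x).div (hasDerivAt_stdCdf x) (stdCdf_pos x).ne'
  refine h.congr_deriv ?_
  ring

lemma hazard_strictAnti : StrictAnti hazard := by
  apply strictAnti_of_hasDerivAt_neg (f' := fun x => -stdPdf x * (x * stdCdf x + stdPdf x) / (stdCdf x) ^ 2)
    hasDerivAt_hazard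
  intro x
  have h1 := stdPdf_pos x
  have h2 := stdCdf_pos x
  have h3 := key_pos x
  have : 0 < stdPdf x * (x * stdCdf x + stdPdf x) / (stdCdf x) ^ 2 := by positivity
  rw [neg_mul, neg_div]
  exact neg_lt_zero.2 this

/-- For δ > 0 and σ > 0, x ↦ Φ((x-δ)/σ)/Φ(x/σ) is strictly increasing. -/
theorem cdf_ratio_strictMono (δ σ : ℝ) (hδ : 0 < δ) (hσ : 0 < σ) :
    StrictMono (fun x : ℝ => stdCdf ((x - δ) / σ) / stdCdf (x / σ)) := by
  set F : ℝ → ℝ := fun x => Real.log (stdCdf ((x - δ) / σ)) - Real.log (stdCdf (x / σ)) with hF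
  have hFmono : StrictMono F := by
    apply strictMono_of_hasDerivAt_pos
      (f' := fun x => hazard ((x - δ) / σ) * (1 / σ) - hazard (x / σ) * (1 / σ))
    · intro x
      have h1 : HasDerivAt (fun y : ℝ => (y - δ) / σ) (1 / σ) x := by
        simpa using ((hasDerivAt_id x).sub_const δ).div_const σ
      have h2 : HasDerivAt (fun y : ℝ => y / σ) (1 / σ) x := by
        simpa using (hasDerivAt_id x).div_const σ
      have d1 := ((hasDerivAt_stdCdf ((x - δ) / σ)).comp x h1).log (by exact (stdCdf_pos _).ne')
      have d2 := ((hasDerivAt_stdCdf (x / σ)).comp x h2).log (by exact (stdCdf_pos _).ne')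
      have := d1.sub d2
      simp only [Function.comp_apply] at this
      refine this.congr_deriv ?_
      unfold hazard
      ring
    · intro x
      have hlt : (x - δ) / σ < x / σ := by
        apply div_lt_div_of_pos_right ?_ hσ <;> linarith
      have := hazard_strictAnti hlt
      have h1 : 0 < 1 / σ := by positivity
      nlinarith
  intro a b hab
  have ha1 := stdCdf_pos ((a - δ) / σ); have ha2 := stdCdf_pos (a / σ)
  have hb1 := stdCdf_pos ((b - δ) / σ); have hb2 := stdCdf_pos (b / σ)
  have key := hFmono hab
  simp only [hF] at key
  have hA : stdCdf ((a - δ) / σ) / stdCdf (a / σ) = Real.exp (F a) := by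
    rw [hF]; rw [Real.exp_sub, Real.exp_log ha1, Real.exp_log ha2]
  have hB : stdCdf ((b - δ) / σ) / stdCdf (b / σ) = Real.exp (F b) := by
    rw [hF]; rw [Real.exp_sub, Real.exp_log hb1, Real.exp_log hb2]
  simp only [hA, hB]
  exact Real.exp_lt_exp.2 (hFmono hab)
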